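/- Let N ≥ 1 be an integer, let n_1, …, n_N be reals with n_i ≥ 3 for all i, and let A_1, …, A_N > 0 with Σ_{i=1}^N A_i = A. Then Σ_{i=1}^N A_i^{3/2}/(A g(n_i)) ≥ A^{1/2} / ( √N · g( (Σ_{i=1}^N n_i)/N ) ), and equality holds only if all the n_i are equal. -/

import Mathlib

open Real

noncomputable def gfun (n : ℝ) : ℝ :=
  3 * Real.sqrt n * tan (π/n) ^ ((3:ℝ)/2) /
    (log (tan (π/(2*n) + π/4)) + tan (π/n) / cos (π/n))

noncomputable def LL (x : ℝ) : ℝ := log (tan (x/2 + π/4))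
noncomputable def DDf (x : ℝ) : ℝ := sin x / cos x ^ 2 + LL x

lemma cos_pos' {x : ℝ} (hx : 0 ≤ x) (hx2 : x < π/2) : 0 < cos x :=
  cos_pos_of_mem_Ioo ⟨by linarith [pi_pos], hx2⟩

lemma theta_mem {x : ℝ} (hx : 0 ≤ x) (hx2 : x < π/2) :
    0 < cos (x/2 + π/4) ∧ 0 < tan (x/2 + π/4) ∧ 1 ≤ tan (x/2 + π/4) := by
  have h1 : 0 < x/2 + π/4 := by linarith [pi_pos]
  have h2 : x/2 + π/4 < π/2 := by linarith
  have hc : 0 < cos (x/2 + π/4) := cos_pos_of_mem_Ioo ⟨by linarith [pi_pos], h2⟩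
  refine ⟨hc, tan_pos_of_pos_of_lt_pi_div_two h1 h2, ?_⟩
  rw [tan_eq_sin_div_cos, le_div_iff₀ hc, one_mul]
  have h3 : cos (x/2+π/4) ≤ cos (π/2 - (x/2+π/4)) :=
    Real.cos_le_cos_of_nonneg_of_le_pi (by linarith) (by linarith [pi_pos]) (by linarith [pi_pos])
  rwa [Real.cos_pi_div_two_sub] at h3

lemma hasDerivAt_LL {x : ℝ} (hx : -(π/2) < x) (hx2 : x < π/2) :
    HasDerivAt LL (1/cos x) x := by
  have h2a : x/2 + π/4 < π/2 := by linarith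
  have h1a : 0 < x/2 + π/4 := by linarith [pi_pos]
  have hθc : 0 < cos (x/2 + π/4) := cos_pos_of_mem_Ioo ⟨by linarith [pi_pos], h2a⟩
  have hθt : 0 < tan (x/2 + π/4) := tan_pos_of_pos_of_lt_pi_div_two h1a h2a
  have haff : HasDerivAt (fun y : ℝ => y/2 + π/4) (1/2) x := by
    simpa using ((hasDerivAt_id x).div_const 2).add_const (π/4)
  have htan : HasDerivAt tan (1 / cos (x/2 + π/4) ^ 2) (x/2 + π/4) :=
    hasDerivAt_tan hθc.ne'
  have hcomp := HasDerivAt.comp x htan haff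
  have hlog := hcomp.log hθt.ne'
  have hxcos : 0 < cos x := cos_pos_of_mem_Ioo ⟨hx, hx2⟩
  refine hlog.congr_deriv (Eq.symm ?_)
  have h4 : 2 * sin (x/2 + π/4) * cos (x/2 + π/4) = cos x := by
    have h := sin_two_mul (x/2+π/4)
    rw [show 2*(x/2+π/4) = x + π/2 by ring, sin_add_pi_div_two] at h
    linarith
  show 1/cos x = 1 / cos (x/2 + π/4) ^ 2 * (1/2) / ((tan ∘ fun y => y/2 + π/4) x)
  rw [Function.comp_apply, tan_eq_sin_div_cos]
  have hs : 0 < sin (x/2+π/4) := by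
    have := tan_eq_sin_div_cos (x/2+π/4)
    exact sin_pos_of_pos_of_lt_pi h1a (by linarith [pi_pos])
  set θ := x/2 + π/4 with hθdef
  rw [eq_div_iff (by positivity : sin θ / cos θ ≠ 0)]
  field_simp
  linear_combination h4

lemma LL_zero : LL 0 = 0 := by
  norm_num [LL, tan_pi_div_four]

lemma hasDerivAt_aux1 {z : ℝ} (hz1 : -(π/2) < z) (hz2 : z < π/2) :
    HasDerivAt (fun y => sin y / cos y ^ 2 - LL y) (2 * sin z ^ 2 / cos z ^ 3) z := by
  have hc : 0 < cos z := cos_pos_of_mem_Ioo ⟨hz1, hz2⟩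
  have h1 : HasDerivAt (fun y => sin y / cos y ^ 2)
      ((cos z * cos z ^ 2 - sin z * (2 * cos z ^ 1 * (-sin z))) / (cos z ^ 2) ^ 2) z :=
    (hasDerivAt_sin z).div ((hasDerivAt_cos z).pow 2) (by positivity)
  have h2 := h1.sub (hasDerivAt_LL hz1 hz2)
  refine h2.congr_deriv (Eq.symm ?_)
  field_simp
  ring

lemma hasDerivAt_aux2 {z : ℝ} (hz1 : -(π/2) < z) (hz2 : z < π/2) :
    HasDerivAt (fun y => LL y - sin y / (1 + sin y ^ 2))
      (1/cos z - cos z * (1 - sin z ^ 2) / (1 + sin z ^ 2) ^ 2) z := by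
  have h1 : HasDerivAt (fun y => sin y / (1 + sin y ^ 2))
      ((cos z * (1 + sin z ^ 2) - sin z * (0 + 2 * sin z ^ 1 * cos z)) / (1 + sin z ^ 2) ^ 2) z :=
    (hasDerivAt_sin z).div ((hasDerivAt_const z 1).add ((hasDerivAt_sin z).pow 2))
      (by positivity)
  have h2 := (hasDerivAt_LL hz1 hz2).sub h1
  refine h2.congr_deriv (Eq.symm ?_)
  have : (0:ℝ) < (1 + sin z ^2) := by positivity
  have hc : 0 < cos z := cos_pos_of_mem_Ioo ⟨hz1, hz2⟩
  field_simp
  ring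

lemma LL_lt {x : ℝ} (hx : 0 < x) (hx2 : x < π/2) : LL x < sin x / cos x ^ 2 := by
  have key : StrictMonoOn (fun y => sin y / cos y ^ 2 - LL y) (Set.Icc 0 x) := by
    apply strictMonoOn_of_deriv_pos (convex_Icc 0 x)
    · intro z hz
      exact (hasDerivAt_aux1 (by simp at hz; linarith [pi_pos, hz.1])
        (by simp at hz; linarith [hz.2])).continuousAt.continuousWithinAt
    · intro z hz
      rw [interior_Icc] at hz
      rw [(hasDerivAt_aux1 (by linarith [pi_pos, hz.1]) (by linarith [hz.2])).deriv]
      have hs : 0 < sin z := sin_pos_of_pos_of_lt_pi hz.1 (by linarith [pi_pos, hz.2])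
      have hc : 0 < cos z := cos_pos_of_mem_Ioo ⟨by linarith [pi_pos, hz.1], by linarith [hz.2]⟩
      positivity
  have h := key (Set.left_mem_Icc.2 hx.le) (Set.right_mem_Icc.2 hx.le) hx
  simp only [LL_zero, sin_zero, cos_zero] at h
  norm_num at h
  linarith

lemma lt_LL {x : ℝ} (hx : 0 < x) (hx2 : x < π/2) : sin x / (1 + sin x ^ 2) < LL x := by
  have key : StrictMonoOn (fun y => LL y - sin y / (1 + sin y ^ 2)) (Set.Icc 0 x) := by
    apply strictMonoOn_of_deriv_pos (convex_Icc 0 x)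
    · intro z hz
      exact (hasDerivAt_aux2 (by simp at hz; linarith [pi_pos, hz.1])
        (by simp at hz; linarith [hz.2])).continuousAt.continuousWithinAt
    · intro z hz
      rw [interior_Icc] at hz
      rw [(hasDerivAt_aux2 (by linarith [pi_pos, hz.1]) (by linarith [hz.2])).deriv]
      have hs : 0 < sin z := sin_pos_of_pos_of_lt_pi hz.1 (by linarith [pi_pos, hz.2])
      have hc : 0 < cos z := cos_pos_of_mem_Ioo ⟨by linarith [pi_pos, hz.1], by linarith [hz.2]⟩
      have hc1 : cos z < 1 := by
        nlinarith [sin_sq_add_cos_sq z]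
      have h2 : cos z * (1 - sin z ^ 2) / (1 + sin z ^ 2) ^ 2 < 1 := by
        rw [div_lt_one (by positivity)]
        nlinarith [sq_nonneg (sin z), sq_nonneg (cos z)]
      have h3 : 1 < 1 / cos z := by
        rw [lt_div_iff₀ hc]; linarith
      linarith
  have h := key (Set.left_mem_Icc.2 hx.le) (Set.right_mem_Icc.2 hx.le) hx
  simp only [LL_zero, sin_zero] at h
  norm_num at h
  linarith

noncomputable def FF (x : ℝ) : ℝ := 9*π*sin x^3/(x*cos x^3*DDf x^2)
noncomputable def uu (x : ℝ) : ℝ := 3/(sin x*cos x) - 1/x - 4/(cos x^3*DDf x)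
noncomputable def vv (x : ℝ) : ℝ :=
  -3*(cos x^2 - sin x^2)/(sin x^2*cos x^2) + 1/x^2
    - 12*sin x/(cos x^4*DDf x) + 8/(cos x^6*DDf x^2)

lemma DD_ub {x : ℝ} (hx : 0 < x) (hx2 : x < π/2) : DDf x < 2*sin x/cos x^2 := by
  have h := LL_lt hx hx2
  have hc : 0 < cos x := cos_pos_of_mem_Ioo ⟨by linarith [pi_pos], hx2⟩
  have : DDf x = sin x/cos x^2 + LL x := rfl
  rw [this]
  have : 2*sin x/cos x^2 = sin x/cos x^2 + sin x/cos x^2 := by ring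
  rw [this]
  linarith

lemma DD_lb {x : ℝ} (hx : 0 < x) (hx2 : x < π/2) :
    2*sin x/(cos x^2*(1+sin x^2)) < DDf x := by
  have h := lt_LL hx hx2
  have hc : 0 < cos x := cos_pos_of_mem_Ioo ⟨by linarith [pi_pos], hx2⟩
  have hs : 0 < sin x := sin_pos_of_pos_of_lt_pi hx (by linarith [pi_pos])
  have key : 2*sin x/(cos x^2*(1+sin x^2)) = sin x/cos x^2 + sin x/(1+sin x^2) := by
    rw [div_add_div _ _ (by positivity) (by positivity), div_eq_div_iff (by positivity) (by positivity)]
    linear_combination (-(sin x^3*cos x^2) - sin x*cos x^2) * sin_sq_add_cos_sq x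
  rw [key]
  have : DDf x = sin x/cos x^2 + LL x := rfl
  rw [this]
  linarith

lemma DD_pos {x : ℝ} (hx : 0 < x) (hx2 : x < π/2) : 0 < DDf x := by
  have h := DD_lb hx hx2
  have hc : 0 < cos x := cos_pos_of_mem_Ioo ⟨by linarith [pi_pos], hx2⟩
  have hs : 0 < sin x := sin_pos_of_pos_of_lt_pi hx (by linarith [pi_pos])
  have : 0 < 2*sin x/(cos x^2*(1+sin x^2)) := by positivity
  linarith

lemma hasDerivAt_DD {z : ℝ} (hz1 : -(π/2) < z) (hz2 : z < π/2) :
    HasDerivAt DDf (2/cos z^3) z := by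
  have hc : 0 < cos z := cos_pos_of_mem_Ioo ⟨hz1, hz2⟩
  have h1 : HasDerivAt (fun y => sin y / cos y ^ 2)
      ((cos z * cos z ^ 2 - sin z * (2 * cos z ^ 1 * (-sin z))) / (cos z ^ 2) ^ 2) z :=
    (hasDerivAt_sin z).div ((hasDerivAt_cos z).pow 2) (by positivity)
  have h2 := h1.add (hasDerivAt_LL hz1 hz2)
  refine h2.congr_deriv (Eq.symm ?_)
  field_simp
  linear_combination (-2) * sin_sq_add_cos_sq z

lemma hasDerivAt_FF {x : ℝ} (hx : 0 < x) (hx2 : x < π/2) :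
    HasDerivAt FF (FF x * uu x) x := by
  have hc : 0 < cos x := cos_pos_of_mem_Ioo ⟨by linarith [pi_pos], hx2⟩
  have hs : 0 < sin x := sin_pos_of_pos_of_lt_pi hx (by linarith [pi_pos])
  have hD : 0 < DDf x := DD_pos hx hx2
  have hnum : HasDerivAt (fun y => 9*π*sin y^3) (9*π*(3*sin x^2*cos x)) x := by
    have := ((hasDerivAt_sin x).pow 3).const_mul (9*π)
    refine this.congr_deriv (Eq.symm ?_) <;> ring
  have hden : HasDerivAt (fun y => y*cos y^3*DDf y^2)
      ((1*cos x^3 + x*(3*cos x^2*(-sin x)))*DDf x^2 + (x*cos x^3)*(2*DDf x*(2/cos x^3))) x := by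
    have h1 : HasDerivAt (fun y => y*cos y^3) (1*cos x^3 + x*(3*cos x^2*(-sin x))) x := by
      have := (hasDerivAt_id x).mul ((hasDerivAt_cos x).pow 3)
      refine this.congr_deriv (Eq.symm ?_); simp only [id, Pi.pow_apply]; ring
    have h2 : HasDerivAt (fun y => DDf y^2) (2*DDf x*(2/cos x^3)) x := by
      have := ((hasDerivAt_DD (by linarith [pi_pos]) hx2).pow 2)
      refine this.congr_deriv (Eq.symm ?_) <;> ring
    have := h1.mul h2
    refine this.congr_deriv (Eq.symm ?_) <;> ring
  have := hnum.div hden (by positivity)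
  refine this.congr_deriv (Eq.symm ?_)
  show FF x * uu x = _
  rw [FF, uu]
  field_simp
  linear_combination (-3*cos x^2*DDf x*x) * sin_sq_add_cos_sq x

lemma hasDerivAt_uu {x : ℝ} (hx : 0 < x) (hx2 : x < π/2) :
    HasDerivAt uu (vv x) x := by
  have hc : 0 < cos x := cos_pos_of_mem_Ioo ⟨by linarith [pi_pos], hx2⟩
  have hs : 0 < sin x := sin_pos_of_pos_of_lt_pi hx (by linarith [pi_pos])
  have hD : 0 < DDf x := DD_pos hx hx2
  have h1 : HasDerivAt (fun y => 3/(sin y*cos y))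
      ((0*(sin x*cos x) - 3*(cos x*cos x + sin x*(-sin x)))/(sin x*cos x)^2) x :=
    (hasDerivAt_const x 3).div ((hasDerivAt_sin x).mul (hasDerivAt_cos x)) (by positivity)
  have h2 : HasDerivAt (fun y : ℝ => 1/y) ((0*x - 1*1)/x^2) x :=
    (hasDerivAt_const x 1).div (hasDerivAt_id x) (by positivity)
  have h3 : HasDerivAt (fun y => 4/(cos y^3*DDf y))
      ((0*(cos x^3*DDf x) - 4*((3*cos x^2*(-sin x))*DDf x + cos x^3*(2/cos x^3)))/(cos x^3*DDf x)^2) x :=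
    (hasDerivAt_const x 4).div (((hasDerivAt_cos x).pow 3).mul
      (hasDerivAt_DD (by linarith [pi_pos]) hx2)) (by positivity)
  have := (h1.sub h2).sub h3
  refine this.congr_deriv (Eq.symm ?_)
  rw [vv]
  field_simp
  linear_combination (0:ℝ) * sin_sq_add_cos_sq x

lemma key_sign {x : ℝ} (hx : 0 < x) (hx2 : x < π/2) :
    x * uu x^2 + x * vv x + 2 * uu x < 0 := by
  have hc : 0 < cos x := cos_pos_of_mem_Ioo ⟨by linarith [pi_pos], hx2⟩
  have hs : 0 < sin x := sin_pos_of_pos_of_lt_pi hx (by linarith [pi_pos])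
  have hD : 0 < DDf x := DD_pos hx hx2
  have hub := DD_ub hx hx2
  have hlb := DD_lb hx hx2
  have hQ : ((1+sin x^2)/cos x^2) * (DDf x - 2*sin x/cos x^2) *
      (DDf x - 2*sin x/(cos x^2*(1+sin x^2))) < 0 := by
    apply mul_neg_of_neg_of_pos
    · apply mul_neg_of_pos_of_neg
      · positivity
      · linarith
    · linarith
  have hiden : x * uu x^2 + x * vv x + 2 * uu x =
      (6*x/(sin x^2*DDf x^2)) * (((1+sin x^2)/cos x^2) * (DDf x - 2*sin x/cos x^2) *
      (DDf x - 2*sin x/(cos x^2*(1+sin x^2)))) := by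
    rw [uu, vv]
    field_simp
    linear_combination (-3*cos x^4*x^2*DDf x^2) * sin_sq_add_cos_sq x
  rw [hiden]
  have hpos : 0 < 6*x/(sin x^2*DDf x^2) := by positivity
  exact mul_neg_of_pos_of_neg hpos hQ

noncomputable def ffun (n : ℝ) : ℝ := FF (π/n)
noncomputable def f1 (n : ℝ) : ℝ := FF (π/n) * uu (π/n) * (-(π/n^2))
noncomputable def f2 (n : ℝ) : ℝ :=
  (FF (π/n) * uu (π/n) * uu (π/n) + FF (π/n) * vv (π/n)) * (π/n^2) * (π/n^2)
    + FF (π/n) * uu (π/n) * (2*π/n^3)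

lemma x_facts {n : ℝ} (hn : 2 < n) : 0 < π/n ∧ π/n < π/2 := by
  have hπ := pi_pos
  constructor
  · positivity
  · rw [div_lt_div_iff₀ (by linarith) (by norm_num)]
    nlinarith

lemma hasDerivAt_pidiv {n : ℝ} (hn : 0 < n) :
    HasDerivAt (fun m : ℝ => π/m) (-(π/n^2)) n := by
  have h := ((hasDerivAt_inv hn.ne').const_mul π)
  simp only [div_eq_mul_inv]
  refine h.congr_deriv (Eq.symm ?_)
  ring

lemma hasDerivAt_ffun {n : ℝ} (hn : 2 < n) : HasDerivAt ffun (f1 n) n := by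
  obtain ⟨hx1, hx2⟩ := x_facts hn
  have h := (hasDerivAt_FF hx1 hx2).comp n (hasDerivAt_pidiv (by linarith))
  exact h

lemma hasDerivAt_f1 {n : ℝ} (hn : 2 < n) : HasDerivAt f1 (f2 n) n := by
  obtain ⟨hx1, hx2⟩ := x_facts hn
  have hFu : HasDerivAt (fun x => FF x * uu x)
      (FF (π/n) * uu (π/n) * uu (π/n) + FF (π/n) * vv (π/n)) (π/n) := by
    exact (hasDerivAt_FF hx1 hx2).mul (hasDerivAt_uu hx1 hx2)
  have h1 : HasDerivAt (fun m => FF (π/m) * uu (π/m))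
      ((FF (π/n) * uu (π/n) * uu (π/n) + FF (π/n) * vv (π/n)) * (-(π/n^2))) n :=
    hFu.comp n (hasDerivAt_pidiv (by linarith))
  have h2 : HasDerivAt (fun m : ℝ => -(π/m^2)) (2*π/n^3) n := by
    have hp : HasDerivAt (fun m : ℝ => m^2) (2*n) n := by
      simpa using hasDerivAt_pow 2 n
    have := ((hp.inv (by positivity)).const_mul π).neg
    simp only [div_eq_mul_inv]
    refine this.congr_deriv (Eq.symm ?_)
    field_simp
  have := h1.mul h2
  refine this.congr_deriv (Eq.symm ?_)
  rw [f2]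
  ring

lemma f2_neg {n : ℝ} (hn : 2 < n) : f2 n < 0 := by
  obtain ⟨hx1, hx2⟩ := x_facts hn
  set x := π/n with hxdef
  have hc : 0 < cos x := cos_pos_of_mem_Ioo ⟨by linarith [pi_pos], hx2⟩
  have hs : 0 < sin x := sin_pos_of_pos_of_lt_pi hx1 (by linarith [pi_pos])
  have hD : 0 < DDf x := DD_pos hx1 hx2
  have hF : 0 < FF x := by rw [FF]; positivity
  have hkey := key_sign hx1 hx2
  have hn0 : 0 < n := by linarith
  have heq : f2 n = (x^2/π)^2/x * (FF x * (x * uu x^2 + x * vv x + 2 * uu x)) := by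
    rw [f2, ← hxdef]
    have h1 : π/n^2 = x^2/π := by rw [hxdef]; field_simp
    have h2 : 2*π/n^3 = 2*x^3/π^2 := by rw [hxdef]; field_simp
    rw [h1, h2]
    field_simp
  rw [heq]
  apply mul_neg_of_pos_of_neg
  · positivity
  · exact mul_neg_of_pos_of_neg hF hkey

lemma strictConcave_ffun : StrictConcaveOn ℝ (Set.Ici 3) ffun := by
  apply strictConcaveOn_of_deriv2_neg (convex_Ici 3)
  · intro n hn
    exact (hasDerivAt_ffun (by simp at hn; linarith)).continuousAt.continuousWithinAt
  · intro n hn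
    rw [interior_Ici] at hn
    have hn' : (2:ℝ) < n := by simp at hn; linarith
    have heq : deriv ffun =ᶠ[nhds n] f1 := by
      filter_upwards [isOpen_Ioi.mem_nhds (show n ∈ Set.Ioi (2:ℝ) from hn')] with m hm
      exact (hasDerivAt_ffun hm).deriv
    have : deriv^[2] ffun n = deriv (deriv ffun) n := rfl
    rw [this, heq.deriv_eq, (hasDerivAt_f1 hn').deriv]
    exact f2_neg hn'

lemma gfun_den {n : ℝ} (hn : 3 ≤ n) :
    log (tan (π/(2*n) + π/4)) + tan (π/n) / cos (π/n) = DDf (π/n) := by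
  rw [DDf, LL, show π/(2*n) = (π/n)/2 by ring]
  nth_rewrite 2 [tan_eq_sin_div_cos]
  rw [div_div]
  ring

lemma gfun_eq {n : ℝ} (hn : 3 ≤ n) :
    gfun n = 3 * Real.sqrt n * tan (π/n) ^ ((3:ℝ)/2) / DDf (π/n) := by
  rw [gfun, gfun_den hn]

lemma gfun_pos {n : ℝ} (hn : 3 ≤ n) : 0 < gfun n := by
  obtain ⟨hx1, hx2⟩ := x_facts (by linarith : (2:ℝ) < n)
  have ht : 0 < tan (π/n) := tan_pos_of_pos_of_lt_pi_div_two hx1 hx2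
  have hD : 0 < DDf (π/n) := DD_pos hx1 hx2
  rw [gfun_eq hn]
  have hsq : 0 < Real.sqrt n := Real.sqrt_pos.2 (by linarith)
  have hrp : 0 < tan (π/n) ^ ((3:ℝ)/2) := Real.rpow_pos_of_pos ht _
  positivity

lemma gfun_sq {n : ℝ} (hn : 3 ≤ n) : gfun n ^ 2 = ffun n := by
  obtain ⟨hx1, hx2⟩ := x_facts (by linarith : (2:ℝ) < n)
  have ht : 0 < tan (π/n) := tan_pos_of_pos_of_lt_pi_div_two hx1 hx2
  have hD : 0 < DDf (π/n) := DD_pos hx1 hx2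
  have hc : 0 < cos (π/n) := cos_pos_of_mem_Ioo ⟨by linarith [pi_pos], hx2⟩
  have hn0 : (0:ℝ) < n := by linarith
  rw [gfun_eq hn, div_pow, ffun, FF]
  have hnum : (3 * Real.sqrt n * tan (π/n) ^ ((3:ℝ)/2)) ^ 2 = 9 * n * tan (π/n) ^ 3 := by
    rw [mul_pow, mul_pow, Real.sq_sqrt (by linarith : (0:ℝ) ≤ n)]
    have h2 : (tan (π/n) ^ ((3:ℝ)/2)) ^ 2 = tan (π/n) ^ 3 := by
      rw [← Real.rpow_natCast (tan (π/n) ^ ((3:ℝ)/2)) 2, ← Real.rpow_mul ht.le]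
      norm_num
    rw [h2]; ring
  rw [hnum, tan_eq_sin_div_cos, div_pow]
  rw [div_eq_div_iff (by positivity) (by positivity)]
  field_simp

theorem stmt_7 (N : ℕ) (hN : 1 ≤ N) (nn : Fin N → ℝ) (hn : ∀ i, 3 ≤ nn i)
    (A_ : Fin N → ℝ) (hA : ∀ i, 0 < A_ i) (A : ℝ) (hsum : ∑ i, A_ i = A) :
    A ^ ((1:ℝ)/2) / (Real.sqrt N * gfun ((∑ i, nn i) / N))
      ≤ (∑ i, A_ i ^ ((3:ℝ)/2) / (A * gfun (nn i))) ∧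
    ((∑ i, A_ i ^ ((3:ℝ)/2) / (A * gfun (nn i)))
        = A ^ ((1:ℝ)/2) / (Real.sqrt N * gfun ((∑ i, nn i) / N)) →
      ∀ i j, nn i = nn j) := by
  have hNpos : 0 < (N:ℝ) := by exact_mod_cast Nat.pos_of_ne_zero (by omega)
  have hApos : 0 < A := by
    rw [← hsum]
    exact Finset.sum_pos (fun i _ => hA i) ⟨⟨0, by omega⟩, Finset.mem_univ _⟩
  obtain ⟨nbar, hnbar_def⟩ : ∃ x : ℝ, x = (∑ i, nn i) / N := ⟨_, rfl⟩
  rw [← hnbar_def]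
  have hnbar : 3 ≤ nbar := by
    rw [hnbar_def, le_div_iff₀ hNpos]
    calc (3:ℝ) * N = ∑ _i : Fin N, (3:ℝ) := by
          simp [Finset.card_univ, mul_comm]
      _ ≤ ∑ i, nn i := Finset.sum_le_sum fun i _ => hn i
  have hgbar : 0 < gfun nbar := gfun_pos hnbar
  obtain ⟨G, hG_def⟩ : ∃ g : Fin N → ℝ, g = fun i => gfun (nn i) := ⟨_, rfl⟩
  simp only [show ∀ i, gfun (nn i) = G i from fun i => by rw [hG_def]]
  have hGpos : ∀ i, 0 < G i := fun i => by rw [hG_def]; exact gfun_pos (hn i)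
  obtain ⟨S, hS_def⟩ : ∃ x : ℝ, x = ∑ i, A_ i ^ ((3:ℝ)/2) / G i := ⟨_, rfl⟩
  obtain ⟨T, hT_def⟩ : ∃ x : ℝ, x = ∑ i, G i ^ 2 := ⟨_, rfl⟩
  have hSpos : 0 < S := hS_def ▸
    Finset.sum_pos (fun i _ => div_pos (Real.rpow_pos_of_pos (hA i) _) (hGpos i))
      ⟨⟨0, by omega⟩, Finset.mem_univ _⟩
  have hTpos : 0 < T := hT_def ▸
    Finset.sum_pos (fun i _ => pow_pos (hGpos i) 2)
      ⟨⟨0, by omega⟩, Finset.mem_univ _⟩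
  -- weights
  have hw1 : ∑ _i : Fin N, 1/(N:ℝ) = 1 := by
    simp [Finset.card_univ]
    field_simp
  have hmem : ∀ i ∈ Finset.univ, nn i ∈ Set.Ici (3:ℝ) := fun i _ => hn i
  have hcenter : (∑ i, (1/(N:ℝ)) • nn i) = nbar := by
    rw [hnbar_def, Finset.sum_div]
    congr 1; funext i
    rw [smul_eq_mul]; ring
  -- Jensen (non-strict)
  have hJ : T ≤ N * gfun nbar ^ 2 := by
    have h := strictConcave_ffun.concaveOn.le_map_sum (fun i _ => by positivity) hw1 hmem
    rw [hcenter] at h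
    have h2 : ∑ i, (1/(N:ℝ)) • ffun (nn i) = (1/(N:ℝ)) * T := by
      rw [hT_def, Finset.mul_sum]
      apply Finset.sum_congr rfl
      intro i _
      simp only [hG_def, smul_eq_mul]
      rw [gfun_sq (hn i)]
    rw [h2, ← gfun_sq hnbar] at h
    calc T = N * ((1/(N:ℝ)) * T) := by field_simp
      _ ≤ N * gfun nbar ^ 2 := by
        apply mul_le_mul_of_nonneg_left h hNpos.le
  -- Jensen (strict)
  have hJs : (∃ i j, nn i ≠ nn j) → T < N * gfun nbar ^ 2 := by
    rintro ⟨i, j, hij⟩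
    have h := strictConcave_ffun.lt_map_sum (fun i _ => by positivity) hw1 hmem
      ⟨i, Finset.mem_univ i, j, Finset.mem_univ j, hij⟩
    rw [hcenter] at h
    have h2 : ∑ i, (1/(N:ℝ)) • ffun (nn i) = (1/(N:ℝ)) * T := by
      rw [hT_def, Finset.mul_sum]
      apply Finset.sum_congr rfl
      intro i _
      simp only [hG_def, smul_eq_mul]
      rw [gfun_sq (hn i)]
    rw [h2, ← gfun_sq hnbar] at h
    calc T = N * ((1/(N:ℝ)) * T) := by field_simp
      _ < N * gfun nbar ^ 2 := by
        apply (mul_lt_mul_iff_right₀ hNpos).2 h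
  -- Hölder
  have hpq : Real.HolderConjugate (3/2) 3 := ⟨by norm_num, by norm_num, by norm_num⟩
  have hHold : A ≤ S ^ ((2:ℝ)/3) * T ^ ((1:ℝ)/3) := by
    have h := Real.inner_le_Lp_mul_Lq_of_nonneg Finset.univ hpq
      (f := fun i => A_ i / G i ^ ((2:ℝ)/3)) (g := fun i => G i ^ ((2:ℝ)/3))
      (fun i _ => le_of_lt (div_pos (hA i) (Real.rpow_pos_of_pos (hGpos i) _)))
      (fun i _ => (Real.rpow_pos_of_pos (hGpos i) _).le)
    have e1 : ∑ i, (A_ i / G i ^ ((2:ℝ)/3)) * G i ^ ((2:ℝ)/3) = A := by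
      rw [← hsum]
      congr 1; funext i
      rw [div_mul_cancel₀]
      exact ne_of_gt (Real.rpow_pos_of_pos (hGpos i) _)
    have e2 : ∀ i : Fin N, (A_ i / G i ^ ((2:ℝ)/3)) ^ ((3:ℝ)/2) = A_ i ^ ((3:ℝ)/2) / G i := by
      intro i
      rw [Real.div_rpow (hA i).le (Real.rpow_pos_of_pos (hGpos i) _).le]
      congr 1
      rw [← Real.rpow_mul (hGpos i).le]
      norm_num
    have e3 : ∀ i : Fin N, (G i ^ ((2:ℝ)/3)) ^ ((3:ℝ)) = G i ^ 2 := by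
      intro i
      rw [← Real.rpow_mul (hGpos i).le,
        show ((2:ℝ)/3*3) = ((2:ℕ):ℝ) by norm_num, Real.rpow_natCast]
    rw [e1] at h
    calc A ≤ (∑ i, (A_ i / G i ^ ((2:ℝ)/3)) ^ ((3:ℝ)/2)) ^ (1/((3:ℝ)/2)) *
          (∑ i, (G i ^ ((2:ℝ)/3)) ^ ((3:ℝ))) ^ (1/(3:ℝ)) := h
      _ = S ^ ((2:ℝ)/3) * T ^ ((1:ℝ)/3) := by
        rw [show (1/((3:ℝ)/2)) = (2:ℝ)/3 by norm_num, show (1/(3:ℝ)) = (1:ℝ)/3 by norm_num]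
        congr 2
        · rw [hS_def]; congr 1; funext i; exact e2 i
        · rw [hT_def]; congr 1; funext i; exact e3 i
  -- From Hölder: A^{3/2} ≤ S * T^{1/2}
  have hA32 : A ^ ((3:ℝ)/2) ≤ S * T ^ ((1:ℝ)/2) := by
    calc A ^ ((3:ℝ)/2) ≤ (S ^ ((2:ℝ)/3) * T ^ ((1:ℝ)/3)) ^ ((3:ℝ)/2) :=
          Real.rpow_le_rpow hApos.le hHold (by norm_num)
      _ = S * T ^ ((1:ℝ)/2) := by
        rw [Real.mul_rpow (by positivity) (by positivity),
          ← Real.rpow_mul hSpos.le, ← Real.rpow_mul hTpos.le]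
        norm_num
  have hsqrtN : ((N:ℝ) * gfun nbar ^ 2) ^ ((1:ℝ)/2) = Real.sqrt N * gfun nbar := by
    rw [← Real.sqrt_eq_rpow, Real.sqrt_mul (by positivity), Real.sqrt_sq hgbar.le]
  have hLHS : (∑ i, A_ i ^ ((3:ℝ)/2) / (A * G i)) = S / A := by
    rw [hS_def, Finset.sum_div]
    apply Finset.sum_congr rfl
    intro i _
    rw [div_div, mul_comm]
  have hA12 : A ^ ((3:ℝ)/2) = A ^ ((1:ℝ)/2) * A := by
    rw [show ((3:ℝ)/2) = 1/2 + 1 by norm_num, Real.rpow_add hApos, Real.rpow_one]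
  constructor
  · -- main inequality
    rw [hLHS, div_le_div_iff₀ (by positivity) hApos]
    have hT12 : T ^ ((1:ℝ)/2) ≤ Real.sqrt N * gfun nbar := by
      rw [← hsqrtN]
      exact Real.rpow_le_rpow hTpos.le hJ (by norm_num)
    calc A ^ ((1:ℝ)/2) * A = A ^ ((3:ℝ)/2) := by rw [hA12]
      _ ≤ S * T ^ ((1:ℝ)/2) := hA32
      _ ≤ S * (Real.sqrt N * gfun nbar) := by
        apply mul_le_mul_of_nonneg_left hT12 hSpos.le
  · -- equality case
    intro hEq i j
    by_contra hij
    have hstrict := hJs ⟨i, j, hij⟩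
    have hT12 : T ^ ((1:ℝ)/2) < Real.sqrt N * gfun nbar := by
      rw [← hsqrtN]
      exact Real.rpow_lt_rpow hTpos.le hstrict (by norm_num)
    have hchain : A ^ ((1:ℝ)/2) * A < S * (Real.sqrt N * gfun nbar) := by
      calc A ^ ((1:ℝ)/2) * A = A ^ ((3:ℝ)/2) := by rw [hA12]
        _ ≤ S * T ^ ((1:ℝ)/2) := hA32
        _ < S * (Real.sqrt N * gfun nbar) := by
          apply (mul_lt_mul_iff_right₀ hSpos).2 hT12
    rw [hLHS] at hEq
    have : A ^ ((1:ℝ)/2) / (Real.sqrt N * gfun nbar) < S / A := by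
      rw [div_lt_div_iff₀ (by positivity) hApos]
      exact hchain
    rw [hEq] at this
    exact lt_irrefl _ this
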